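/- Let H be a self-adjoint operator on a Hilbert space and A a C*-algebra of bounded operators such that (H+i)^{-1}A and (H-i)^{-1}A are dense subsets of A. Then the bounded transform F(H) = H(1+H²)^{-1/2} satisfies F(H)a ∈ A and aF(H) ∈ A for all a ∈ A. -/

import Mathlib

open scoped ZeroAtInfty
open ZeroAtInftyContinuousMap

/-- Powers of an element in the non-unital algebra `C₀(ℝ, ℂ)`: `spowAux s n = s^(n+1)`. -/
noncomputable def spowAux (s : C₀(ℝ, ℂ)) : ℕ → C₀(ℝ, ℂ)
  | 0 => s
  | n + 1 => s * spowAux s n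

lemma spowAux_apply (s : C₀(ℝ, ℂ)) (n : ℕ) (x : ℝ) : spowAux s n x = (s x) ^ (n + 1) := by
  induction n with
  | zero => simp [spowAux]
  | succ n ih =>
    show (s * spowAux s n) x = _
    simp [ih, pow_succ]
    ring

/-- Evaluation of a real polynomial with zero constant term at `s`, inside `C₀(ℝ, ℂ)`. -/
noncomputable def polyAux (s : C₀(ℝ, ℂ)) (q : Polynomial ℝ) : C₀(ℝ, ℂ) :=
  ∑ k ∈ Finset.range q.natDegree, ((q.coeff (k + 1) : ℂ) • spowAux s k)

lemma polyAux_apply (s : C₀(ℝ, ℂ)) (q : Polynomial ℝ) (h0 : q.coeff 0 = 0) {x : ℝ} {t : ℝ}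
    (hst : s x = (t : ℂ)) : polyAux s q x = ((q.eval t : ℝ) : ℂ) := by
  classical
  have happ : ∀ T : Finset ℕ, (∑ k ∈ T, ((q.coeff (k + 1) : ℂ) • spowAux s k)) x
      = ∑ k ∈ T, ((q.coeff (k + 1) : ℂ) • spowAux s k) x := by
    intro T
    induction T using Finset.induction with
    | empty => simp
    | @insert a T ha ih => rw [Finset.sum_insert ha, Finset.sum_insert ha, ← ih]; simp
  rw [polyAux, happ]
  simp only [ZeroAtInftyContinuousMap.smul_apply, spowAux_apply, hst, smul_eq_mul]
  rw [Polynomial.eval_eq_sum_range, Finset.sum_range_succ']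
  push_cast [h0]
  simp

/-- The function `ρ(x) = (1+x²)^{-1/2}` as an element of `C₀(ℝ, ℂ)`. -/
noncomputable def rhoAux : C₀(ℝ, ℂ) where
  toFun := fun x => ((Real.sqrt ((1 + x ^ 2)⁻¹) : ℝ) : ℂ)
  continuous_toFun := by
    refine Complex.continuous_ofReal.comp (Real.continuous_sqrt.comp ?_)
    exact (continuous_const.add (continuous_pow 2)).inv₀ fun x => by show (1:ℝ) + x ^ 2 ≠ 0; positivity
  zero_at_infty' := by
    have h1 : Filter.Tendsto (fun x : ℝ => 1 + x ^ 2) (Filter.cocompact ℝ) Filter.atTop := by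
      have h2 : Filter.Tendsto (fun t : ℝ => 1 + t ^ 2) Filter.atTop Filter.atTop :=
        Filter.tendsto_atTop_add_const_left _ 1 (Filter.tendsto_pow_atTop two_ne_zero)
      have h3 : (fun x : ℝ => 1 + x ^ 2) = (fun t : ℝ => 1 + t ^ 2) ∘ fun x : ℝ => ‖x‖ := by
        funext x; simp [Function.comp, sq_abs]
    
      rw [h3]
      exact h2.comp tendsto_norm_cocompact_atTop
    have h4 : Filter.Tendsto (fun x : ℝ => (1 + x ^ 2)⁻¹) (Filter.cocompact ℝ) (nhds 0) :=
      h1.inv_tendsto_atTop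
    have h5 := (Real.continuous_sqrt.tendsto 0).comp h4
    rw [Real.sqrt_zero] at h5
    have h6 := (Complex.continuous_ofReal.tendsto 0).comp h5
    rw [Complex.ofReal_zero] at h6
    exact h6

lemma rhoAux_apply (x : ℝ) : rhoAux x = ((Real.sqrt ((1 + x ^ 2)⁻¹) : ℝ) : ℂ) := rfl

/-- Let `H` be a self-adjoint operator on a Hilbert space, encoded through its
continuous functional calculus `φ : C₀(ℝ) → B(E)`, `f ↦ f(H)`, and let `A ⊆ B(E)` be a
C*-algebra such that `(H+i)⁻¹·A` and `(H-i)⁻¹·A` are dense subsets of `A` (here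
`(H±i)⁻¹ = φ r±` with `r± ∈ C₀(ℝ)` the resolvent functions `x ↦ (x ± i)⁻¹`).  Then the bounded
transform `F(H) = H(1+H²)^{-1/2}` — the self-adjoint operator `FH` characterized by
`FH · g(H) = (F·g)(H)` for all `g ∈ C₀(ℝ)`, where `F(x) = x(1+x²)^{-1/2}` — satisfies
`F(H)·a ∈ A` and `a·F(H) ∈ A` for all `a ∈ A`. -/
theorem stmt2 {E : Type*} [NormedAddCommGroup E] [InnerProductSpace ℂ E] [CompleteSpace E]
    (A : NonUnitalStarSubalgebra ℂ (E →L[ℂ] E))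
    (hAclosed : IsClosed (A : Set (E →L[ℂ] E)))
    (φ : C₀(ℝ, ℂ) →⋆ₙₐ[ℂ] (E →L[ℂ] E)) (hφ : Continuous φ)
    (rp rm : C₀(ℝ, ℂ))
    (hrp : ∀ x : ℝ, rp x = ((x : ℂ) + Complex.I)⁻¹)
    (hrm : ∀ x : ℝ, rm x = ((x : ℂ) - Complex.I)⁻¹)
    (hpmem : ∀ a ∈ A, φ rp * a ∈ A)
    (hmmem : ∀ a ∈ A, φ rm * a ∈ A)
    (hpdense : (A : Set (E →L[ℂ] E)) ⊆ closure ((fun a => φ rp * a) '' (A : Set (E →L[ℂ] E))))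
    (hmdense : (A : Set (E →L[ℂ] E)) ⊆ closure ((fun a => φ rm * a) '' (A : Set (E →L[ℂ] E))))
    (FH : E →L[ℂ] E) (hFHsa : IsSelfAdjoint FH) (hFHnorm : ‖FH‖ ≤ 1)
    (hFH : ∀ f g : C₀(ℝ, ℂ),
      (∀ x : ℝ, g x = ((x : ℂ) / (Real.sqrt (1 + x ^ 2) : ℝ)) * f x) → FH * φ f = φ g) :
    ∀ a ∈ A, FH * a ∈ A ∧ a * FH ∈ A := by
  classical
  -- The set of functions `h` with `φ h · A ⊆ A`.
  set P : Set C₀(ℝ, ℂ) := {h | ∀ b ∈ A, φ h * b ∈ A} with hPdef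
  have hP0 : (0 : C₀(ℝ, ℂ)) ∈ P := by
    intro b hb
    rw [map_zero, zero_mul]
    exact A.zero_mem
  have hPadd : ∀ f ∈ P, ∀ g ∈ P, f + g ∈ P := by
    intro f hf g hg b hb
    rw [map_add, add_mul]
    exact A.add_mem (hf b hb) (hg b hb)
  have hPsub : ∀ f ∈ P, ∀ g ∈ P, f - g ∈ P := by
    intro f hf g hg b hb
    rw [map_sub, sub_mul]
    exact A.sub_mem (hf b hb) (hg b hb)
  have hPsmul : ∀ (c : ℂ), ∀ f ∈ P, c • f ∈ P := by
    intro c f hf b hb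
    rw [map_smul, smul_mul_assoc]
    exact A.smul_mem c (hf b hb)
  have hPmul : ∀ f ∈ P, ∀ g ∈ P, f * g ∈ P := by
    intro f hf g hg b hb
    rw [map_mul, mul_assoc]
    exact hf _ (hg b hb)
  have hPrp : rp ∈ P := fun b hb => hpmem b hb
  have hPrm : rm ∈ P := fun b hb => hmmem b hb
  have hPclosed : IsClosed P := by
    have hrw : P = ⋂ b ∈ (A : Set (E →L[ℂ] E)), ((fun h => φ h * b) ⁻¹' (A : Set (E →L[ℂ] E))) := by
      ext h
      simp [hPdef, Set.mem_iInter]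
    rw [hrw]
    refine isClosed_biInter fun b hb => hAclosed.preimage ?_
    exact (continuous_mul_right b).comp hφ
  -- `s = rp * rm` equals `x ↦ (1+x²)⁻¹`.
  have hsval : ∀ x : ℝ, (rp * rm) x = (((1 + x ^ 2)⁻¹ : ℝ) : ℂ) := by
    intro x
    have h1 : ((x : ℂ) + Complex.I) * ((x : ℂ) - Complex.I) = (((1 + x ^ 2 : ℝ)) : ℂ) := by
      push_cast
      ring_nf
      rw [Complex.I_sq]
      ring
    calc (rp * rm) x = ((x : ℂ) + Complex.I)⁻¹ * ((x : ℂ) - Complex.I)⁻¹ := by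
          simp [hrp, hrm]
      _ = (((x : ℂ) + Complex.I) * ((x : ℂ) - Complex.I))⁻¹ := (mul_inv _ _).symm
      _ = (((1 + x ^ 2 : ℝ)) : ℂ)⁻¹ := by rw [h1]
      _ = (((1 + x ^ 2)⁻¹ : ℝ) : ℂ) := by push_cast; ring
  have hsP : rp * rm ∈ P := hPmul rp hPrp rm hPrm
  have hspowP : ∀ n : ℕ, spowAux (rp * rm) n ∈ P := by
    intro n
    induction n with
    | zero => exact hsP
    | succ n ih => exact hPmul _ hsP _ ih
  have hpolyP : ∀ q : Polynomial ℝ, polyAux (rp * rm) q ∈ P := by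
    intro q
    refine Finset.sum_induction _ (· ∈ P) (fun f g hf hg => hPadd f hf g hg) hP0 ?_
    intro k _
    exact hPsmul _ _ (hspowP k)
  -- `ρ ∈ P` by Weierstrass approximation of the square root.
  have hρP : rhoAux ∈ P := by
    rw [← hPclosed.closure_eq]
    rw [Metric.mem_closure_iff]
    intro ε hε
    set f : C(Set.Icc (0:ℝ) 1, ℝ) :=
      ⟨fun t => Real.sqrt t, Real.continuous_sqrt.comp continuous_subtype_val⟩ with hf
    obtain ⟨p, hp⟩ := exists_polynomial_near_continuousMap 0 1 f (ε / 4) (by positivity)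
    have hpt : ∀ t : ℝ, t ∈ Set.Icc (0:ℝ) 1 → |p.eval t - Real.sqrt t| < ε / 4 := by
      intro t ht
      have := (p.toContinuousMapOn (Set.Icc (0:ℝ) 1) - f).norm_coe_le_norm ⟨t, ht⟩
      have h2 : ‖(p.toContinuousMapOn (Set.Icc (0:ℝ) 1) - f) ⟨t, ht⟩‖
          = |p.eval t - Real.sqrt t| := by
        simp [hf, Polynomial.toContinuousMapOn, Polynomial.toContinuousMap, Real.norm_eq_abs]
      rw [h2] at this
      exact lt_of_le_of_lt this hp
    set c := p.coeff 0 with hc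
    have hcsmall : |c| < ε / 4 := by
      have := hpt 0 (by norm_num)
      simpa [hc, Polynomial.coeff_zero_eq_eval_zero] using this
    set q := p - Polynomial.C c with hq
    have hq0 : q.coeff 0 = 0 := by simp [hq, hc]
    have hqt : ∀ t : ℝ, t ∈ Set.Icc (0:ℝ) 1 → |q.eval t - Real.sqrt t| ≤ ε / 2 := by
      intro t ht
      have h1 : q.eval t - Real.sqrt t = (p.eval t - Real.sqrt t) + (-c) := by
        simp [hq]; ring
      rw [h1]
      calc |(p.eval t - Real.sqrt t) + (-c)| ≤ |p.eval t - Real.sqrt t| + |(-c)| := abs_add_le _ _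
        _ ≤ ε / 4 + ε / 4 := by
            rw [abs_neg]
            exact add_le_add (le_of_lt (hpt t ht)) (le_of_lt hcsmall)
        _ = ε / 2 := by ring
    refine ⟨polyAux (rp * rm) q, hpolyP q, ?_⟩
    have hdist : dist rhoAux (polyAux (rp * rm) q) ≤ ε / 2 := by
      rw [← dist_toBCF_eq_dist]
      rw [BoundedContinuousFunction.dist_le (by positivity)]
      intro x
      have hτ : (1 + x ^ 2)⁻¹ ∈ Set.Icc (0:ℝ) 1 := by
        constructor
        · positivity
        · rw [inv_le_one_iff₀]
          right
          nlinarith [sq_nonneg x]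
      have h1 : polyAux (rp * rm) q x = ((q.eval ((1 + x ^ 2)⁻¹) : ℝ) : ℂ) :=
        polyAux_apply _ q hq0 (hsval x)
      show dist (rhoAux x) (polyAux (rp * rm) q x) ≤ ε / 2
      rw [h1, rhoAux_apply, dist_eq_norm]
      rw [← Complex.ofReal_sub]
      rw [Complex.norm_real]
      rw [Real.norm_eq_abs, abs_sub_comm]
      exact hqt _ hτ
    exact lt_of_le_of_lt hdist (by linarith)
  -- The function `g = F · rp`.
  set g : C₀(ℝ, ℂ) := rhoAux - Complex.I • (rp * rhoAux) with hgdef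
  have hgval : ∀ x : ℝ, g x = ((x : ℂ) / (Real.sqrt (1 + x ^ 2) : ℝ)) * rp x := by
    intro x
    have hd : (0:ℝ) < Real.sqrt (1 + x ^ 2) := Real.sqrt_pos.mpr (by positivity)
    have hdne : ((Real.sqrt (1 + x ^ 2) : ℝ) : ℂ) ≠ 0 := by
      exact_mod_cast Complex.ofReal_ne_zero.mpr (ne_of_gt hd)
    have hxI : ((x : ℂ) + Complex.I) ≠ 0 := by
      intro h
      have := congrArg Complex.im h
      simp at this
    have hρ : rhoAux x = (((Real.sqrt (1 + x ^ 2))⁻¹ : ℝ) : ℂ) := by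
      rw [rhoAux_apply, Real.sqrt_inv]
    have : g x = rhoAux x - Complex.I * (rp x * rhoAux x) := by
      simp [hgdef]
    rw [this, hρ, hrp x]
    push_cast
    field_simp
    ring_nf
  have hgP : g ∈ P := hPsub _ hρP _ (hPsmul _ _ (hPmul rp hPrp rhoAux hρP))
  have hFHg : FH * φ rp = φ g := hFH rp g hgval
  -- Main left-multiplication result.
  have hleft : ∀ a ∈ A, FH * a ∈ A := by
    intro a ha
    have h1 : FH * a ∈ closure ((fun y => FH * y) ''
        ((fun b => φ rp * b) '' (A : Set (E →L[ℂ] E)))) := by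
      refine map_mem_closure (continuous_mul_left FH) (hpdense ha) ?_
      intro y hy
      exact Set.mem_image_of_mem _ hy
    have h2 : ((fun y => FH * y) '' ((fun b => φ rp * b) '' (A : Set (E →L[ℂ] E))))
        ⊆ (A : Set (E →L[ℂ] E)) := by
      rintro _ ⟨_, ⟨b, hb, rfl⟩, rfl⟩
      show FH * (φ rp * b) ∈ A
      rw [← mul_assoc, hFHg]
      exact hgP b hb
    exact closure_minimal h2 hAclosed h1
  intro a ha
  refine ⟨hleft a ha, ?_⟩
  have hstar : a * FH = star (FH * star a) := by
    rw [star_mul, star_star, hFHsa.star_eq]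
  rw [hstar]
  exact star_mem (hleft _ (star_mem ha))
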